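/- Let S and A be measurable spaces, let π₁ and π₂ be Markov kernels from S to A, and let P be a Markov kernel from S × A to S. Let r : S × A × S → ℝ be measurable with 0 ≤ r(s,a,s') ≤ 1, and let γ ∈ (0,1). Let V₁, V₂ : S → ℝ be bounded measurable functions satisfying the Bellman equations Vᵢ(s) = ∫_A ∫_S (r(s,a,s') + γ·Vᵢ(s')) dP((s,a))(s') dπᵢ(s)(a) for all s ∈ S (i = 1,2). If KL(π₁(s), π₂(s)) ≤ ε_π for all s ∈ S, then |V₁(s) − V₂(s)| ≤ √(2·ε_π)/(1−γ)² for every s ∈ S. -/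

import Mathlib

open MeasureTheory ProbabilityTheory
open scoped ENNReal

open scoped Classical in
/-- The Kullback–Leibler divergence `∫ log (dμ/dν) dμ` between two measures,
equal to `+∞` when `μ` is not absolutely continuous with respect to `ν`
(or when the integrand is not integrable). -/
noncomputable def KL {X : Type*} [MeasurableSpace X] (μ ν : Measure X) : ℝ≥0∞ :=
  if μ ≪ ν ∧ Integrable (fun x => Real.log ((μ.rnDeriv ν) x).toReal) μ then
    ENNReal.ofReal (∫ x, Real.log ((μ.rnDeriv ν) x).toReal ∂μ) else ⊤

/-- Pointwise inequality: `(√x - 1)² ≤ x log x - x + 1` for `x ≥ 0`. -/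
lemma aux_log_ineq {x : ℝ} (hx : 0 ≤ x) :
    (Real.sqrt x - 1) ^ 2 ≤ x * Real.log x - x + 1 := by
  rcases eq_or_lt_of_le hx with h | h
  · simp [← h]
  · have hu0 : 0 < Real.sqrt x := Real.sqrt_pos.mpr h
    set u := Real.sqrt x with hu
    have hx' : u ^ 2 = x := Real.sq_sqrt hx
    have hlog : Real.log x = 2 * Real.log u := by
      rw [← hx', Real.log_pow]; push_cast; ring
    have hl : Real.log u⁻¹ ≤ u⁻¹ - 1 := Real.log_le_sub_one_of_pos (inv_pos.mpr hu0)
    rw [Real.log_inv] at hl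
    have h2 : u * (-Real.log u) ≤ u * (u⁻¹ - 1) :=
      mul_le_mul_of_nonneg_left hl hu0.le
    have h3 : u * u⁻¹ = 1 := mul_inv_cancel₀ hu0.ne'
    rw [hlog, ← hx']
    nlinarith [sq_nonneg (u - 1)]

/-- Pointwise AM-GM style bound used in the Pinsker argument. -/
lemma aux_pt {y t : ℝ} (hy : 0 ≤ y) :
    t * |y - 1| ≤ t ^ 2 / 2 * (Real.sqrt y - 1) ^ 2 + (y + 1) := by
  have hs : Real.sqrt y ^ 2 = y := Real.sq_sqrt hy
  have hs0 : 0 ≤ Real.sqrt y := Real.sqrt_nonneg y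
  set s := Real.sqrt y with hsdef
  rw [show y = s ^ 2 from hs.symm]
  rcases abs_cases (s ^ 2 - 1) with ⟨he, _⟩ | ⟨he, _⟩ <;> rw [he] <;>
    nlinarith [sq_nonneg (t * (s - 1) - (s + 1)), sq_nonneg (t * (s - 1) + (s + 1)),
      sq_nonneg (s - 1)]

lemma KL_le_elim {X : Type*} [MeasurableSpace X] {μ ν : Measure X} {ε : ℝ}
    (h : KL μ ν ≤ ENNReal.ofReal ε) :
    μ ≪ ν ∧ Integrable (fun x => Real.log ((μ.rnDeriv ν) x).toReal) μ := by
  by_contra hc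
  rw [KL, if_neg hc] at h
  exact absurd (lt_of_le_of_lt h ENNReal.ofReal_lt_top) (lt_irrefl _)

/-- Weak Pinsker inequality: `∫ |dμ/dν - 1| dν ≤ 2 √ε` when `KL(μ,ν) ≤ ε`. -/
lemma weak_pinsker {X : Type*} [MeasurableSpace X] (μ ν : Measure X)
    [IsProbabilityMeasure μ] [IsProbabilityMeasure ν] {ε : ℝ}
    (h : KL μ ν ≤ ENNReal.ofReal ε) :
    ∫ x, |((μ.rnDeriv ν x).toReal) - 1| ∂ν ≤ 2 * Real.sqrt ε := by
  obtain ⟨hac, hint⟩ := KL_le_elim h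
  rw [KL, if_pos ⟨hac, hint⟩] at h
  set g : X → ℝ := fun x => ((μ.rnDeriv ν) x).toReal with hg
  have hgm : Measurable g := (Measure.measurable_rnDeriv μ ν).ennreal_toReal
  have hg0 : ∀ x, 0 ≤ g x := fun x => ENNReal.toReal_nonneg
  have hgint : Integrable g ν := Measure.integrable_toReal_rnDeriv
  have hgone : ∫ x, g x ∂ν = 1 := by
    rw [Measure.integral_toReal_rnDeriv hac]; simp
  -- the KL integral as a ν-integral
  have hI : ∫ x, Real.log (g x) ∂μ = ∫ x, g x * Real.log (g x) ∂ν := by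
    rw [← integral_rnDeriv_smul hac]; simp [smul_eq_mul, hg]
  have hglog_int : Integrable (fun x => g x * Real.log (g x)) ν := by
    have := (integrable_rnDeriv_smul_iff hac).mpr hint
    simpa [smul_eq_mul] using this
  -- bound on the KL integral
  set e : ℝ := max ε 0 with he
  have hse : Real.sqrt e = Real.sqrt ε := by
    rcases le_total 0 ε with hε | hε
    · rw [he, max_eq_left hε]
    · rw [he, max_eq_right hε]
      simp [Real.sqrt_eq_zero'.mpr hε]
  have hIe : ∫ x, Real.log (g x) ∂μ ≤ e := by
    have h2 : ENNReal.ofReal (∫ x, Real.log (g x) ∂μ) ≤ ENNReal.ofReal e :=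
      h.trans (ENNReal.ofReal_le_ofReal (le_max_left _ _))
    exact (ENNReal.ofReal_le_ofReal_iff (le_max_right ε 0)).mp h2
  -- Hellinger-type quantity
  set q : X → ℝ := fun x => (Real.sqrt (g x) - 1) ^ 2 with hq
  have hqm : Measurable q := ((Real.continuous_sqrt.measurable.comp hgm).sub measurable_const).pow_const 2
  have hφint : Integrable (fun x => g x * Real.log (g x) - g x + 1) ν :=
    (hglog_int.sub hgint).add (integrable_const 1)
  have hqφ : ∀ x, q x ≤ g x * Real.log (g x) - g x + 1 := fun x => aux_log_ineq (hg0 x)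
  have hqint : Integrable q ν := by
    refine Integrable.mono' hφint hqm.aestronglyMeasurable (ae_of_all _ fun x => ?_)
    rw [Real.norm_eq_abs, abs_of_nonneg (sq_nonneg _)]
    exact hqφ x
  set K : ℝ := ∫ x, q x ∂ν with hK
  have hK0 : 0 ≤ K := integral_nonneg fun x => sq_nonneg _
  have hKe : K ≤ e := by
    have h1 : K ≤ ∫ x, (g x * Real.log (g x) - g x + 1) ∂ν :=
      integral_mono hqint hφint hqφ
    have hsub : Integrable (fun x => g x * Real.log (g x) - g x) ν := hglog_int.sub hgint
    have h2 : ∫ x, (g x * Real.log (g x) - g x + 1) ∂ν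
        = ∫ x, g x * Real.log (g x) ∂ν := by
      rw [integral_add hsub (integrable_const 1),
        integral_sub hglog_int hgint, hgone, integral_const]
      simp
    rw [h2, ← hI] at h1
    exact h1.trans hIe
  have habs_int : Integrable (fun x => |g x - 1|) ν := (hgint.sub (integrable_const 1)).abs
  rcases eq_or_lt_of_le hK0 with hK0' | hKpos
  · -- K = 0 : g = 1 a.e.
    have hq0 : q =ᵐ[ν] 0 := by
      rw [← integral_eq_zero_iff_of_nonneg (fun x => sq_nonneg _) hqint]
      exact hK0'.symm
    have : (fun x => |g x - 1|) =ᵐ[ν] 0 := by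
      filter_upwards [hq0] with x hx
      have hsx : Real.sqrt (g x) = 1 := by
        have := sq_eq_zero_iff.mp hx
        linarith [this]
      have : g x = 1 := by
        have := Real.sq_sqrt (hg0 x)
        rw [hsx] at this; simpa using this.symm
      simp [this]
    rw [integral_congr_ae this]
    simp [Real.sqrt_nonneg]
  · -- K > 0
    set t : ℝ := 2 / Real.sqrt K with ht
    have hsK : 0 < Real.sqrt K := Real.sqrt_pos.mpr hKpos
    have htpos : 0 < t := by positivity
    have hpt : ∀ x, t * |g x - 1| ≤ t ^ 2 / 2 * q x + (g x + 1) := fun x => aux_pt (hg0 x)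
    have hconst_int : Integrable (fun x => g x + 1) ν := hgint.add (integrable_const 1)
    have hcq_int : Integrable (fun x => t ^ 2 / 2 * q x) ν := hqint.const_mul _
    have hrhs_int : Integrable (fun x => t ^ 2 / 2 * q x + (g x + 1)) ν := hcq_int.add hconst_int
    have hmain : t * ∫ x, |g x - 1| ∂ν ≤ t ^ 2 / 2 * K + 2 := by
      calc t * ∫ x, |g x - 1| ∂ν = ∫ x, t * |g x - 1| ∂ν := (integral_const_mul t _).symm
        _ ≤ ∫ x, (t ^ 2 / 2 * q x + (g x + 1)) ∂ν :=
            integral_mono (habs_int.const_mul t) hrhs_int hpt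
        _ = t ^ 2 / 2 * K + 2 := by
            rw [integral_add hcq_int hconst_int, integral_const_mul,
              integral_add hgint (integrable_const 1), hgone, integral_const]
            simp
            norm_num
            exact Or.inl hK.symm
    have hKsq : Real.sqrt K ^ 2 = K := Real.sq_sqrt hK0
    have ht2 : t ^ 2 / 2 * K = 2 := by
      rw [ht]
      field_simp
      nlinarith [hKsq]
    have hfinal : ∫ x, |g x - 1| ∂ν ≤ 2 * Real.sqrt K := by
      rw [ht2] at hmain
      have h4 : t * (2 * Real.sqrt K) = 4 := by
        rw [ht]; field_simp; ring
      have h5 : t * ∫ x, |g x - 1| ∂ν ≤ t * (2 * Real.sqrt K) := by linarith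
      exact le_of_mul_le_mul_left h5 htpos
    refine hfinal.trans ?_
    have : Real.sqrt K ≤ Real.sqrt ε := by
      rw [← hse]; exact Real.sqrt_le_sqrt hKe
    linarith

/-- A measurable function bounded between two constants is integrable w.r.t. a finite measure. -/
lemma integrable_of_bounds {X : Type*} [MeasurableSpace X] {μ : Measure X} [IsFiniteMeasure μ]
    {f : X → ℝ} (hm : AEStronglyMeasurable f μ) {lo hi : ℝ}
    (h1 : ∀ x, lo ≤ f x) (h2 : ∀ x, f x ≤ hi) : Integrable f μ := by
  refine Integrable.mono' (integrable_const (max |lo| |hi|)) hm (ae_of_all _ fun x => ?_)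
  rw [Real.norm_eq_abs, abs_le]
  constructor
  · calc -(max |lo| |hi|) ≤ -|lo| := by simp [le_max_left]
      _ ≤ lo := neg_abs_le lo
      _ ≤ f x := h1 x
  · exact (h2 x).trans ((le_abs_self hi).trans (le_max_right _ _))

lemma integral_le_of_le {X : Type*} [MeasurableSpace X] (μ : Measure X) [IsProbabilityMeasure μ]
    {f : X → ℝ} {lo hi : ℝ} (hm : AEStronglyMeasurable f μ)
    (h1 : ∀ x, lo ≤ f x) (h2 : ∀ x, f x ≤ hi) :
    lo ≤ ∫ x, f x ∂μ ∧ ∫ x, f x ∂μ ≤ hi := by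
  have hint : Integrable f μ := integrable_of_bounds hm h1 h2
  constructor
  · calc lo = ∫ _, lo ∂μ := by simp
      _ ≤ _ := integral_mono (integrable_const lo) hint h1
  · calc ∫ x, f x ∂μ ≤ ∫ _, hi ∂μ := integral_mono hint (integrable_const hi) h2
      _ = hi := by simp

/-- Difference of integrals of a bounded function against two probability measures,
bounded via the L¹ distance of the density to 1. -/
lemma integral_diff_bound {X : Type*} [MeasurableSpace X] (μ ν : Measure X)
    [IsProbabilityMeasure μ] [IsProbabilityMeasure ν] (hac : μ ≪ ν)
    {f : X → ℝ} (hfm : Measurable f) {lo hi : ℝ}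
    (hlo : ∀ x, lo ≤ f x) (hhi : ∀ x, f x ≤ hi) :
    |∫ x, f x ∂μ - ∫ x, f x ∂ν| ≤
      (hi - lo) / 2 * ∫ x, |((μ.rnDeriv ν x).toReal) - 1| ∂ν := by
  have hX : Nonempty X := by
    by_contra hX
    simp only [not_nonempty_iff] at hX
    have : μ Set.univ = 1 := measure_univ
    simp [Set.univ_eq_empty_iff.mpr hX] at this
  obtain ⟨x₀⟩ := hX
  have hlohi : lo ≤ hi := (hlo x₀).trans (hhi x₀)
  set g : X → ℝ := fun x => ((μ.rnDeriv ν) x).toReal with hg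
  have hgm : Measurable g := (Measure.measurable_rnDeriv μ ν).ennreal_toReal
  have hgint : Integrable g ν := Measure.integrable_toReal_rnDeriv
  have hgone : ∫ x, g x ∂ν = 1 := by rw [Measure.integral_toReal_rnDeriv hac]; simp
  have hfintμ : Integrable f μ := integrable_of_bounds hfm.aestronglyMeasurable hlo hhi
  have hfintν : Integrable f ν := integrable_of_bounds hfm.aestronglyMeasurable hlo hhi
  have hgf_int : Integrable (fun x => g x * f x) ν := by
    have := (integrable_rnDeriv_smul_iff hac).mpr hfintμ
    simpa [smul_eq_mul] using this
  have habs_int : Integrable (fun x => |g x - 1|) ν := (hgint.sub (integrable_const 1)).abs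
  set c : ℝ := (lo + hi) / 2 with hc
  have hchange : ∫ x, f x ∂μ = ∫ x, g x * f x ∂ν := by
    rw [← integral_rnDeriv_smul hac]; simp [smul_eq_mul, hg]
  have h_s1 : Integrable (fun x => g x * f x - f x) ν := hgf_int.sub hfintν
  have h_a : Integrable (fun x => g x * f x - f x - c * g x) ν := h_s1.sub (hgint.const_mul c)
  have heq : (fun x => (g x - 1) * (f x - c)) = fun x => g x * f x - f x - c * g x + c := by
    funext x; ring
  have hprod_int : Integrable (fun x => (g x - 1) * (f x - c)) ν := by
    rw [heq]; exact h_a.add (integrable_const c)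
  have hkey : ∫ x, f x ∂μ - ∫ x, f x ∂ν = ∫ x, (g x - 1) * (f x - c) ∂ν := by
    rw [hchange]
    conv_rhs => rw [heq]
    rw [integral_add h_a (integrable_const c), integral_sub h_s1 (hgint.const_mul c),
      integral_sub hgf_int hfintν, integral_const_mul, hgone, integral_const]
    simp
  rw [hkey]
  have hpt : ∀ x, |(g x - 1) * (f x - c)| ≤ (hi - lo) / 2 * |g x - 1| := by
    intro x
    have hfc : |f x - c| ≤ (hi - lo) / 2 := by
      rw [abs_le, hc]
      constructor <;> [linarith [hlo x]; linarith [hhi x]]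
    rw [abs_mul, mul_comm ((hi - lo) / 2)]
    exact mul_le_mul_of_nonneg_left hfc (abs_nonneg _)
  calc |∫ x, (g x - 1) * (f x - c) ∂ν| ≤ ∫ x, |(g x - 1) * (f x - c)| ∂ν := by
        simpa only [Real.norm_eq_abs] using
          norm_integral_le_integral_norm (μ := ν) (fun x => (g x - 1) * (f x - c))
    _ ≤ ∫ x, (hi - lo) / 2 * |g x - 1| ∂ν :=
        integral_mono hprod_int.abs (habs_int.const_mul _) hpt
    _ = (hi - lo) / 2 * ∫ x, |g x - 1| ∂ν := integral_const_mul _ _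

/-- Measurability of a parametrized integral against a Markov kernel. -/
lemma meas_int {S A : Type*} [MeasurableSpace S] [MeasurableSpace A]
    (P : Kernel (S × A) S) [IsMarkovKernel P] (s : S) {u : A × S → ℝ} (hu : Measurable u) :
    Measurable fun a => ∫ s', u (a, s') ∂(P (s, a)) := by
  have h := MeasureTheory.StronglyMeasurable.integral_kernel_prod_right'
    (κ := P.comap (fun a => (s, a)) measurable_prodMk_left) hu.stronglyMeasurable
  simpa [Kernel.comap_apply] using h.measurable

/-- **Policy-difference bound.** Two policies that are `ε_π`-close in KL divergence at every
state, acting in the same environment with rewards in `[0,1]`, have value functions that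
differ pointwise by at most `√(2ε_π)/(1-γ)²`. -/
theorem value_policy_difference_bound
    {S A : Type*} [MeasurableSpace S] [MeasurableSpace A]
    (π₁ π₂ : Kernel S A) [IsMarkovKernel π₁] [IsMarkovKernel π₂]
    (P : Kernel (S × A) S) [IsMarkovKernel P]
    (r : S × A × S → ℝ) (hr : Measurable r)
    (hr_bounds : ∀ s a s', 0 ≤ r (s, a, s') ∧ r (s, a, s') ≤ 1)
    (γ : ℝ) (hγ : γ ∈ Set.Ioo (0 : ℝ) 1)
    (V₁ V₂ : S → ℝ) (hV₁m : Measurable V₁) (hV₂m : Measurable V₂)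
    (hV₁b : ∃ M, ∀ s, |V₁ s| ≤ M) (hV₂b : ∃ M, ∀ s, |V₂ s| ≤ M)
    (hBellman₁ : ∀ s, V₁ s = ∫ a, ∫ s', (r (s, a, s') + γ * V₁ s') ∂(P (s, a)) ∂(π₁ s))
    (hBellman₂ : ∀ s, V₂ s = ∫ a, ∫ s', (r (s, a, s') + γ * V₂ s') ∂(P (s, a)) ∂(π₂ s))
    (ε_π : ℝ) (hKL : ∀ s, KL (π₁ s) (π₂ s) ≤ ENNReal.ofReal ε_π) :
    ∀ s, |V₁ s - V₂ s| ≤ Real.sqrt (2 * ε_π) / (1 - γ) ^ 2 := by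
  intro s₀
  obtain ⟨hγ0, hγ1⟩ := hγ
  have h1γ : 0 < 1 - γ := by linarith
  obtain ⟨M₂, hM₂⟩ := hV₂b
  obtain ⟨M₁, hM₁⟩ := hV₁b
  -- bounds on the range of V₂
  have hbddA : BddAbove (Set.range V₂) := ⟨M₂, by rintro _ ⟨s, rfl⟩; exact (abs_le.mp (hM₂ s)).2⟩
  have hbddB : BddBelow (Set.range V₂) := ⟨-M₂, by rintro _ ⟨s, rfl⟩; exact (abs_le.mp (hM₂ s)).1⟩
  set m : ℝ := sInf (Set.range V₂) with hm
  set M : ℝ := sSup (Set.range V₂) with hM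
  have hmV : ∀ s, m ≤ V₂ s := fun s => csInf_le hbddB ⟨s, rfl⟩
  have hVM : ∀ s, V₂ s ≤ M := fun s => le_csSup hbddA ⟨s, rfl⟩
  have hmM : m ≤ M := (hmV s₀).trans (hVM s₀)
  -- measurability of the inner integrands
  have hu₂ : ∀ s : S, Measurable (fun p : A × S => r (s, p.1, p.2) + γ * V₂ p.2) := fun s =>
    (hr.comp (measurable_const.prodMk measurable_id)).add ((hV₂m.comp measurable_snd).const_mul γ)
  have huw : Measurable (fun p : A × S => V₁ p.2 - V₂ p.2) :=
    (hV₁m.comp measurable_snd).sub (hV₂m.comp measurable_snd)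
  have hiim : ∀ s a : _, Measurable (fun s' => r (s, a, s') + γ * V₂ s') := fun s a =>
    (hr.comp (measurable_const.prodMk (measurable_const.prodMk measurable_id))).add
      (hV₂m.const_mul γ)
  have hf2m : ∀ s, Measurable (fun a => ∫ s', (r (s, a, s') + γ * V₂ s') ∂(P (s, a))) :=
    fun s => meas_int P s (hu₂ s)
  -- bounds on the inner integral for V₂
  have hf2_bounds : ∀ s a, γ * m ≤ (∫ s', (r (s, a, s') + γ * V₂ s') ∂(P (s, a)))
      ∧ (∫ s', (r (s, a, s') + γ * V₂ s') ∂(P (s, a))) ≤ 1 + γ * M := by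
    intro s a
    refine integral_le_of_le (P (s, a)) (hiim s a).aestronglyMeasurable (fun s' => ?_)
      (fun s' => ?_)
    · have h1 := (hr_bounds s a s').1
      have h2 := mul_le_mul_of_nonneg_left (hmV s') hγ0.le
      linarith
    · have h1 := (hr_bounds s a s').2
      have h2 := mul_le_mul_of_nonneg_left (hVM s') hγ0.le
      linarith
  -- range bounds: 0 ≤ m, M ≤ 1/(1-γ)
  have hVlow : ∀ s, γ * m ≤ V₂ s := by
    intro s
    rw [hBellman₂ s]
    exact (integral_le_of_le (π₂ s) (hf2m s).aestronglyMeasurable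
      (fun a => (hf2_bounds s a).1) (fun a => (hf2_bounds s a).2)).1
  have hVhigh : ∀ s, V₂ s ≤ 1 + γ * M := by
    intro s
    rw [hBellman₂ s]
    exact (integral_le_of_le (π₂ s) (hf2m s).aestronglyMeasurable
      (fun a => (hf2_bounds s a).1) (fun a => (hf2_bounds s a).2)).2
  have hγm : γ * m ≤ m := le_csInf ⟨V₂ s₀, ⟨s₀, rfl⟩⟩ (by rintro _ ⟨s, rfl⟩; exact hVlow s)
  have hm0 : 0 ≤ m := by nlinarith
  have hM1 : M ≤ 1 + γ * M := csSup_le ⟨V₂ s₀, ⟨s₀, rfl⟩⟩ (by rintro _ ⟨s, rfl⟩; exact hVhigh s)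
  have hM1γ : M * (1 - γ) ≤ 1 := by nlinarith
  -- the sup-distance d
  set d : ℝ := sSup (Set.range fun s => |V₁ s - V₂ s|) with hd
  have hbddD : BddAbove (Set.range fun s => |V₁ s - V₂ s|) :=
    ⟨M₁ + M₂, by
      rintro _ ⟨s, rfl⟩
      calc |V₁ s - V₂ s| ≤ |V₁ s| + |V₂ s| := abs_sub _ _
        _ ≤ M₁ + M₂ := add_le_add (hM₁ s) (hM₂ s)⟩
  have hd_le : ∀ s, |V₁ s - V₂ s| ≤ d := fun s => le_csSup hbddD ⟨s, rfl⟩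
  have hd0 : 0 ≤ d := (abs_nonneg _).trans (hd_le s₀)
  have hsε : 0 ≤ Real.sqrt ε_π := Real.sqrt_nonneg _
  -- the key recursive estimate
  have key : ∀ s, |V₁ s - V₂ s| ≤ Real.sqrt ε_π / (1 - γ) + γ * d := by
    intro s
    obtain ⟨hac, -⟩ := KL_le_elim (hKL s)
    set f : A → ℝ := fun a => ∫ s', (r (s, a, s') + γ * V₂ s') ∂(P (s, a)) with hf
    set G : A → ℝ := fun a => ∫ s', (V₁ s' - V₂ s') ∂(P (s, a)) with hG
    have hGm : Measurable G := meas_int P s huw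
    have hGa : ∀ a, |G a| ≤ d := by
      intro a
      calc |G a| ≤ ∫ s', |V₁ s' - V₂ s'| ∂(P (s, a)) := by
            simpa only [Real.norm_eq_abs] using
              norm_integral_le_integral_norm (μ := P (s, a)) (fun s' => V₁ s' - V₂ s')
        _ ≤ ∫ _, d ∂(P (s, a)) :=
            integral_mono
              (integrable_of_bounds ((hV₁m.sub hV₂m).abs.aestronglyMeasurable)
                (fun s' => abs_nonneg _) hd_le)
              (integrable_const d) hd_le
        _ = d := by simp
    -- rewrite the Bellman equation for V₁
    have hinner : ∀ a, (∫ s', (r (s, a, s') + γ * V₁ s') ∂(P (s, a))) = f a + γ * G a := by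
      intro a
      have hint1 : Integrable (fun s' => r (s, a, s') + γ * V₂ s') (P (s, a)) :=
        integrable_of_bounds (hiim s a).aestronglyMeasurable
          (lo := γ * m) (hi := 1 + γ * M)
          (fun s' => by nlinarith [(hr_bounds s a s').1, mul_le_mul_of_nonneg_left (hmV s') hγ0.le])
          (fun s' => by nlinarith [(hr_bounds s a s').2, mul_le_mul_of_nonneg_left (hVM s') hγ0.le])
      have hint2 : Integrable (fun s' => V₁ s' - V₂ s') (P (s, a)) :=
        integrable_of_bounds (hV₁m.sub hV₂m).aestronglyMeasurable
          (lo := -d) (hi := d)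
          (fun s' => (abs_le.mp (hd_le s')).1) (fun s' => (abs_le.mp (hd_le s')).2)
      have heq : (fun s' => r (s, a, s') + γ * V₁ s')
          = fun s' => (r (s, a, s') + γ * V₂ s') + γ * (V₁ s' - V₂ s') := by
        funext s'; ring
      rw [heq, integral_add hint1 (hint2.const_mul γ), integral_const_mul]
    have hf_int₁ : Integrable f (π₁ s) :=
      integrable_of_bounds (hf2m s).aestronglyMeasurable
        (fun a => (hf2_bounds s a).1) (fun a => (hf2_bounds s a).2)
    have hG_int₁ : Integrable G (π₁ s) :=
      integrable_of_bounds hGm.aestronglyMeasurable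
        (lo := -d) (hi := d)
        (fun a => (abs_le.mp (hGa a)).1) (fun a => (abs_le.mp (hGa a)).2)
    have hsplit : V₁ s = (∫ a, f a ∂(π₁ s)) + γ * ∫ a, G a ∂(π₁ s) := by
      rw [hBellman₁ s]
      calc ∫ a, ∫ s', (r (s, a, s') + γ * V₁ s') ∂(P (s, a)) ∂(π₁ s)
          = ∫ a, (f a + γ * G a) ∂(π₁ s) := integral_congr_ae (ae_of_all _ hinner)
        _ = (∫ a, f a ∂(π₁ s)) + γ * ∫ a, G a ∂(π₁ s) := by
            rw [integral_add hf_int₁ (hG_int₁.const_mul γ), integral_const_mul]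
    have hV₂s : V₂ s = ∫ a, f a ∂(π₂ s) := hBellman₂ s
    -- first term: policy difference
    have hb1 : |(∫ a, f a ∂(π₁ s)) - ∫ a, f a ∂(π₂ s)| ≤ Real.sqrt ε_π / (1 - γ) := by
      have h1 := integral_diff_bound (π₁ s) (π₂ s) hac (hf2m s)
        (fun a => (hf2_bounds s a).1) (fun a => (hf2_bounds s a).2)
      have h2 := weak_pinsker (π₁ s) (π₂ s) (hKL s)
      have hco : 0 ≤ (1 + γ * M - γ * m) / 2 := by nlinarith [mul_le_mul_of_nonneg_left hmM hγ0.le]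
      have h3 : |(∫ a, f a ∂(π₁ s)) - ∫ a, f a ∂(π₂ s)|
          ≤ (1 + γ * M - γ * m) / 2 * (2 * Real.sqrt ε_π) :=
        h1.trans (mul_le_mul_of_nonneg_left h2 hco)
      refine h3.trans ?_
      have h4 : (1 + γ * M - γ * m) * (1 - γ) ≤ 1 := by
        nlinarith [mul_le_mul_of_nonneg_left hM1γ hγ0.le,
          mul_nonneg (mul_nonneg hγ0.le hm0) h1γ.le]
      calc (1 + γ * M - γ * m) / 2 * (2 * Real.sqrt ε_π)
          = (1 + γ * M - γ * m) * Real.sqrt ε_π := by ring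
        _ ≤ 1 / (1 - γ) * Real.sqrt ε_π :=
            mul_le_mul_of_nonneg_right (by rw [le_div_iff₀ h1γ]; linarith) hsε
        _ = Real.sqrt ε_π / (1 - γ) := by ring
    -- second term
    have hb2 : |∫ a, G a ∂(π₁ s)| ≤ d := by
      calc |∫ a, G a ∂(π₁ s)| ≤ ∫ a, |G a| ∂(π₁ s) := by
            simpa only [Real.norm_eq_abs] using
              norm_integral_le_integral_norm (μ := π₁ s) G
        _ ≤ ∫ _, d ∂(π₁ s) :=
            integral_mono (integrable_of_bounds hGm.abs.aestronglyMeasurable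
              (fun a => abs_nonneg _) hGa) (integrable_const d) hGa
        _ = d := by simp
    calc |V₁ s - V₂ s|
        = |((∫ a, f a ∂(π₁ s)) - ∫ a, f a ∂(π₂ s)) + γ * ∫ a, G a ∂(π₁ s)| := by
          rw [hsplit, hV₂s]; ring_nf
      _ ≤ |(∫ a, f a ∂(π₁ s)) - ∫ a, f a ∂(π₂ s)| + γ * |∫ a, G a ∂(π₁ s)| := by
          refine (abs_add_le _ _).trans ?_
          rw [abs_mul, abs_of_nonneg hγ0.le]
      _ ≤ Real.sqrt ε_π / (1 - γ) + γ * d :=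
          add_le_add hb1 (mul_le_mul_of_nonneg_left hb2 hγ0.le)
  -- solve the recursion
  have hdrec : d ≤ Real.sqrt ε_π / (1 - γ) + γ * d :=
    csSup_le ⟨|V₁ s₀ - V₂ s₀|, ⟨s₀, rfl⟩⟩ (by rintro _ ⟨s, rfl⟩; exact key s)
  have hdfin : d ≤ Real.sqrt ε_π / (1 - γ) ^ 2 := by
    rw [pow_two, ← div_div, le_div_iff₀ h1γ]
    linarith
  refine (hd_le s₀).trans (hdfin.trans ?_)
  have h2ε : Real.sqrt ε_π ≤ Real.sqrt (2 * ε_π) := by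
    rw [Real.sqrt_mul (by norm_num : (0:ℝ) ≤ 2)]
    nlinarith [Real.sqrt_nonneg ε_π, Real.sq_sqrt (by norm_num : (0:ℝ) ≤ 2),
      Real.sqrt_nonneg (2:ℝ)]
  gcongr
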